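/- arXiv:1706.04276 — 5 statements merged into one kernel-verified Lean document; each statement's English description precedes it below -/
import Mathlib

section
/- Let T be a closed convex set in R^n such that T - Π_T(θ*) := {θ - Π_T(θ*) : θ ∈ T} is a polyhedral cone. Then there exists r > 0 such that for all u with ‖u - θ*‖ ≤ r, one has ⟨Π_T(u) - Π_T(θ*), θ* - Π_T(θ*)⟩ = 0. -/
open Set MeasureTheory Filter Metric
open scoped RealInnerProductSpace Topology

noncomputable section

abbrev E (n : ℕ) := EuclideanSpace ℝ (Fin n)

/-- `P` is the metric projection onto `C`. -/
def IsProjOn {n : ℕ} (C : Set (E n)) (P : E n → E n) : Prop :=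
  ∀ x, P x ∈ C ∧ ∀ y ∈ C, ‖x - P x‖ ≤ ‖x - y‖

/-- Tangent cone of `C` at `θ0`: closure of `{α • (θ - θ0) : α ≥ 0, θ ∈ C}`. -/
def tanCone {n : ℕ} (C : Set (E n)) (θ0 : E n) : Set (E n) :=
  closure {u : E n | ∃ α : ℝ, 0 ≤ α ∧ ∃ θ ∈ C, u = α • (θ - θ0)}

/-- The (closed) cone generated by `{-(a j) : j ∈ S}`. -/
def genCone {n m : ℕ} (a : Fin m → E n) (S : Finset (Fin m)) : Set (E n) :=
  closure {z : E n | ∃ c : Fin m → ℝ, (∀ j, 0 ≤ c j) ∧ (∀ j ∉ S, c j = 0) ∧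
    z = ∑ j, c j • (-(a j))}

/-- Farkas-type lemma: if `y` has nonnegative inner product with every `d` satisfying
`⟪a j, d⟫ ≤ 0` for `j ∈ S`, then `y` lies in the closed cone generated by the `-(a j)`. -/
lemma farkas_aux {n m : ℕ} (a : Fin m → E n) (S : Finset (Fin m)) (y : E n)
    (hy : ∀ d : E n, (∀ j ∈ S, ⟪a j, d⟫ ≤ 0) → 0 ≤ ⟪d, y⟫) :
    y ∈ genCone a S := by
  classical
  set G : Set (E n) := {z : E n | ∃ c : Fin m → ℝ, (∀ j, 0 ≤ c j) ∧ (∀ j ∉ S, c j = 0) ∧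
    z = ∑ j, c j • (-(a j))} with hG
  have h0G : (0 : E n) ∈ G := ⟨0, fun j => le_refl 0, fun j _ => rfl, by simp⟩
  let C : ConvexCone ℝ (E n) :=
    { carrier := G
      smul_mem' := by
        rintro t ht z ⟨c, hc0, hcS, rfl⟩
        exact ⟨fun j => t * c j, fun j => mul_nonneg ht.le (hc0 j),
          fun j hj => by simp [hcS j hj],
          by rw [Finset.smul_sum]; simp [smul_smul]⟩
      add_mem' := by
        rintro z ⟨c, hc0, hcS, rfl⟩ z' ⟨c', hc0', hcS', rfl⟩
        exact ⟨c + c', fun j => add_nonneg (hc0 j) (hc0' j),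
          fun j hj => by simp [hcS j hj, hcS' j hj],
          by rw [← Finset.sum_add_distrib]
             exact Finset.sum_congr rfl fun x _ => (add_smul (c x) (c' x) (-(a x))).symm⟩ }
  have hCG : (C : Set (E n)) = G := rfl
  have hCc : (C.closure : Set (E n)) = closure G := by rw [ConvexCone.coe_closure, hCG]
  have hne : (C.closure : Set (E n)).Nonempty := ⟨0, by rw [hCc]; exact subset_closure h0G⟩
  have hclc : IsClosed (C.closure : Set (E n)) := by rw [hCc]; exact isClosed_closure
  have hdual : ((ProperCone.innerDual (C.closure : Set (E n))) : Set (E n)) =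
      {d : E n | ∀ j ∈ S, ⟪a j, d⟫ ≤ 0} := by
    ext x
    constructor
    · intro hx j hj
      have hmem : (-(a j)) ∈ (C.closure : Set (E n)) := by
        rw [hCc]
        refine subset_closure ⟨Pi.single j 1, ?_, ?_, ?_⟩
        · intro i
          rcases eq_or_ne i j with rfl | hij
          · simp
          · simp [Pi.single_eq_of_ne hij]
        · intro i hi
          have hij : i ≠ j := fun h => hi (by rw [h]; exact hj)
          exact Pi.single_eq_of_ne hij 1
        · rw [Finset.sum_eq_single j]
          · simp
          · intro b _ hb
            simp [Pi.single_eq_of_ne hb]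
          · simp
      have := ProperCone.mem_innerDual.1 hx hmem
      rw [inner_neg_left] at this
      linarith
    · intro hx; rw [SetLike.mem_coe, ProperCone.mem_innerDual]; intro z hz
      have hz' : z ∈ (C.closure : Set (E n)) := hz
      rw [hCc] at hz'
      rename' hz' => hz
      have hsub : closure G ⊆ {z : E n | 0 ≤ ⟪z, x⟫} := by
        apply closure_minimal
        · rintro z ⟨c, hc0, hcS, rfl⟩
          simp only [Set.mem_setOf_eq]
          rw [sum_inner]
          apply Finset.sum_nonneg
          intro j _
          rw [real_inner_smul_left, inner_neg_left]
          by_cases hj : j ∈ S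
          · exact mul_nonneg (hc0 j) (neg_nonneg.2 (hx j hj))
          · simp [hcS j hj]
        · exact isClosed_le continuous_const (continuous_id.inner continuous_const)
      exact hsub hz
  let K : ProperCone ℝ (E n) :=
    { toSubmodule := C.closure.toPointedCone (by
        show (0 : E n) ∈ (C.closure : Set (E n)); rw [hCc]; exact subset_closure h0G)
      isClosed' := hclc }
  have hdd : ProperCone.innerDual (ProperCone.innerDual (C.closure : Set (E n)) : Set (E n)) = K :=
    ProperCone.innerDual_innerDual K
  have hy' : y ∈ ProperCone.innerDual (ProperCone.innerDual (C.closure : Set (E n)) : Set (E n)) := by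
    rw [ProperCone.mem_innerDual]
    intro x hx
    rw [hdual] at hx
    exact hy x hx
  rw [hdd] at hy'
  have hy'' : y ∈ (C.closure : Set (E n)) := hy'
  rw [hCc] at hy''
  exact hy''

theorem stmt8 {n : ℕ} (T : Set (E n)) (hne : T.Nonempty) (hcl : IsClosed T)
    (hconv : Convex ℝ T) (P : E n → E n) (hP : IsProjOn T P) (θs : E n)
    (hpoly : ∃ (m : ℕ) (a : Fin m → E n),
      ((fun θ => θ - P θs) '' T) = {x : E n | ∀ j, ⟪a j, x⟫ ≤ 0}) :
    ∃ r > (0 : ℝ), ∀ u : E n, ‖u - θs‖ ≤ r → ⟪P u - P θs, θs - P θs⟫ = 0 := by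
  classical
  obtain ⟨m, a, hT⟩ := hpoly
  set p := P θs with hp
  have hpT : p ∈ T := (hP θs).1
  -- membership characterization
  have hTK : ∀ θ : E n, θ ∈ T ↔ (∀ j, ⟪a j, θ - p⟫ ≤ 0) := by
    intro θ
    constructor
    · intro hθ
      have h1 : θ - p ∈ ((fun θ => θ - p) '' T) := ⟨θ, hθ, rfl⟩
      rw [hT] at h1
      exact h1
    · intro hθ
      have h1 : θ - p ∈ {x : E n | ∀ j, ⟪a j, x⟫ ≤ 0} := hθ
      rw [← hT] at h1
      obtain ⟨θ', hθ', hθ'e⟩ := h1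
      have : θ' = θ := sub_left_injective hθ'e
      exact this ▸ hθ'
  -- variational inequality
  haveI : Nonempty T := ⟨⟨p, hpT⟩⟩
  have hVI : ∀ u : E n, ∀ z ∈ T, ⟪u - P u, z - P u⟫ ≤ 0 := by
    intro u
    have hinf : ‖u - P u‖ = ⨅ w : T, ‖u - w‖ := by
      apply le_antisymm
      · exact le_ciInf fun w => (hP u).2 w w.2
      · exact ciInf_le ⟨0, by rintro x ⟨w, rfl⟩; exact norm_nonneg _⟩ (⟨P u, (hP u).1⟩ : T)
    exact (norm_eq_iInf_iff_real_inner_le_zero hconv (hP u).1).1 hinf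
  -- P is 1-Lipschitz, hence continuous
  have hlip : ∀ u u' : E n, ‖P u - P u'‖ ≤ ‖u - u'‖ := by
    intro u u'
    have h1 := hVI u (P u') (hP u').1
    have h2 := hVI u' (P u) (hP u).1
    have h2' : ⟪P u' - u', P u' - P u⟫ ≤ 0 := by
      have e1 : (P u' - u' : E n) = -(u' - P u') := by abel
      have e2 : (P u' - P u : E n) = -(P u - P u') := by abel
      rw [e1, e2, inner_neg_neg]
      exact h2
    have hsum : ⟪(u - u') - (P u - P u'), P u' - P u⟫ ≤ 0 := by
      have e3 : ((u - u') - (P u - P u') : E n) = (u - P u) + (P u' - u') := by abel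
      rw [e3, inner_add_left]
      linarith
    have key : ‖P u - P u'‖ ^ 2 ≤ ⟪u - u', P u - P u'⟫ := by
      rw [inner_sub_left] at hsum
      have h3 : ⟪P u - P u', P u' - P u⟫ = -‖P u - P u'‖ ^ 2 := by
        rw [show (P u' - P u : E n) = -(P u - P u') by abel, inner_neg_right,
          real_inner_self_eq_norm_sq]
      have h4 : ⟪u - u', P u' - P u⟫ = -⟪u - u', P u - P u'⟫ := by
        rw [show (P u' - P u : E n) = -(P u - P u') by abel, inner_neg_right]
      rw [h3, h4] at hsum
      linarith
    have hn := real_inner_le_norm (u - u') (P u - P u')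
    nlinarith [norm_nonneg (P u - P u'), norm_nonneg (u - u')]
  have hcont : Continuous P := by
    apply LipschitzWith.continuous (K := 1)
    intro u u'
    rw [edist_dist, edist_dist, dist_eq_norm, dist_eq_norm]
    simp only [ENNReal.coe_one, one_mul]
    exact ENNReal.ofReal_le_ofReal (hlip u u')
  -- the closed pieces
  set D : Finset (Fin m) → Set (E n) := fun S =>
    {u : E n | (∀ j ∈ S, ⟪a j, P u - p⟫ = 0) ∧ P u - u ∈ genCone a S} with hD
  have hDclosed : ∀ S, IsClosed (D S) := by
    intro S
    have : D S = (⋂ j ∈ S, {u : E n | ⟪a j, P u - p⟫ = 0}) ∩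
        ((fun u => P u - u) ⁻¹' genCone a S) := by
      ext u
      simp only [hD, Set.mem_setOf_eq, Set.mem_inter_iff, Set.mem_iInter, Set.mem_preimage]
    rw [this]
    apply IsClosed.inter
    · apply isClosed_biInter
      intro j _
      exact isClosed_eq (continuous_const.inner (hcont.sub continuous_const)) continuous_const
    · exact isClosed_closure.preimage (hcont.sub continuous_id)
  -- covering
  have hcover : ∀ u : E n, u ∈ D (Finset.univ.filter (fun j => ⟪a j, P u - p⟫ = 0)) := by
    intro u
    set S := Finset.univ.filter (fun j => ⟪a j, P u - p⟫ = 0) with hS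
    refine ⟨fun j hj => (Finset.mem_filter.1 hj).2, ?_⟩
    apply farkas_aux
    intro d hd
    have hK : ∀ j, ⟪a j, P u - p⟫ ≤ 0 := (hTK (P u)).1 (hP u).1
    -- find a small t > 0 with P u + t • d ∈ T
    have hev : ∀ᶠ t in 𝓝[>] (0 : ℝ), (P u + t • d) ∈ T := by
      have hj' : ∀ j : Fin m, ∀ᶠ t in 𝓝[>] (0 : ℝ), ⟪a j, (P u + t • d) - p⟫ ≤ 0 := by
        intro j
        have hexpand : ∀ t : ℝ, ⟪a j, (P u + t • d) - p⟫ = ⟪a j, P u - p⟫ + t * ⟪a j, d⟫ := by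
          intro t
          have : ((P u + t • d) - p : E n) = (P u - p) + t • d := by abel
          rw [this, inner_add_right, real_inner_smul_right]
        by_cases hjS : j ∈ S
        · have h0 : ⟪a j, P u - p⟫ = 0 := (Finset.mem_filter.1 hjS).2
          have hd0 : ⟪a j, d⟫ ≤ 0 := hd j hjS
          filter_upwards [self_mem_nhdsWithin] with t ht
          rw [hexpand t, h0, zero_add]
          exact mul_nonpos_of_nonneg_of_nonpos (le_of_lt ht) hd0
        · have hlt : ⟪a j, P u - p⟫ < 0 := by
            rcases lt_or_eq_of_le (hK j) with h | h
            · exact h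
            · exact absurd (Finset.mem_filter.2 ⟨Finset.mem_univ j, h⟩) hjS
          have hcontf : Tendsto (fun t : ℝ => ⟪a j, P u - p⟫ + t * ⟪a j, d⟫) (𝓝[>] 0)
              (𝓝 (⟪a j, P u - p⟫ + 0 * ⟪a j, d⟫)) := by
            apply Tendsto.mono_left _ nhdsWithin_le_nhds
            exact (tendsto_const_nhds.add ((continuous_id.mul continuous_const).tendsto 0))
          rw [zero_mul, add_zero] at hcontf
          filter_upwards [hcontf.eventually_lt_const hlt] with t ht
          rw [hexpand t]
          exact le_of_lt ht
      have hall : ∀ᶠ t in 𝓝[>] (0 : ℝ), ∀ j : Fin m, ⟪a j, (P u + t • d) - p⟫ ≤ 0 :=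
        eventually_all.2 hj'
      filter_upwards [hall] with t ht
      exact (hTK _).2 ht
    obtain ⟨t, htT, ht0⟩ := (hev.and self_mem_nhdsWithin).exists
    have hz := hVI u (P u + t • d) htT
    have : ((P u + t • d) - P u : E n) = t • d := by abel
    rw [this, real_inner_smul_right] at hz
    have hupd : ⟪u - P u, d⟫ ≤ 0 := by
      by_contra h
      push_neg at h
      nlinarith [ht0]
    have : ⟪d, P u - u⟫ = -⟪u - P u, d⟫ := by
      rw [real_inner_comm, show (P u - u : E n) = -(u - P u) by abel, inner_neg_left]
    rw [this]
    linarith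
  -- key orthogonality property
  have hkey : ∀ S : Finset (Fin m), θs ∈ D S → ∀ u ∈ D S, ⟪P u - p, θs - p⟫ = 0 := by
    intro S hθ u hu
    have hsub : genCone a S ⊆ {z : E n | ⟪z, P u - p⟫ = 0} := by
      apply closure_minimal
      · rintro z ⟨c, hc0, hcS, rfl⟩
        simp only [Set.mem_setOf_eq]
        rw [sum_inner]
        apply Finset.sum_eq_zero
        intro j _
        rw [real_inner_smul_left, inner_neg_left]
        by_cases hj : j ∈ S
        · rw [hu.1 j hj]; ring
        · rw [hcS j hj]; ring
      · exact isClosed_eq (continuous_id.inner continuous_const) continuous_const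
    have h0 : ⟪p - θs, P u - p⟫ = 0 := hsub hθ.2
    rw [show (θs - p : E n) = -(p - θs) by abel, inner_neg_right, real_inner_comm, h0, neg_zero]
  -- assemble
  have hevD : ∀ᶠ u in 𝓝 θs, ∀ S : Finset (Fin m), θs ∉ D S → u ∉ D S := by
    rw [eventually_all]
    intro S
    by_cases hS : θs ∈ D S
    · exact Eventually.of_forall fun u h => absurd hS h
    · filter_upwards [(hDclosed S).isOpen_compl.mem_nhds hS] with u hu
      exact fun _ => hu
  rw [Metric.eventually_nhds_iff] at hevD
  obtain ⟨ε, hε, hball⟩ := hevD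
  refine ⟨ε / 2, by positivity, ?_⟩
  intro u hu
  have hd : dist u θs < ε := by rw [dist_eq_norm]; linarith
  have h1 := hball hd
  have h2 := hcover u
  set S := Finset.univ.filter (fun j => ⟪a j, P u - p⟫ = 0) with hS
  have h3 : θs ∈ D S := by
    by_contra h
    exact (h1 S h) h2
  exact hkey S h3 u h2
end
end

section
/- Suppose C ⊆ R^n is a polyhedral closed convex set (so that C coincides with the translate of the tangent cone T_C(Π_C(θ*)) in a neighborhood of Π_C(θ*)), θ* ∈ R^n, Z is a zero-mean random vector with E‖Z‖² < ∞, and Y = θ* + σZ. Then lim_{σ→0+} σ^{-2} E‖Π_C(Y) - Π_C(θ*)‖² = E‖Π_K(Z)‖², where K = T_C(Π_C(θ*)) ∩ (θ* - Π_C(θ*))^⊥. -/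
open Set MeasureTheory Filter Metric
open scoped RealInnerProductSpace Topology

noncomputable section

variable {n : ℕ}

lemma isProjOn_varIneq {C : Set (E n)} {P : E n → E n} (hC : Convex ℝ C)
    (hP : IsProjOn C P) (x : E n) {y : E n} (hy : y ∈ C) :
    ⟪x - P x, y - P x⟫ ≤ 0 := by
  by_contra hlt
  push_neg at hlt
  set d := y - P x with hd
  have hdne : d ≠ 0 := by
    intro h
    rw [h, inner_zero_right] at hlt
    exact lt_irrefl 0 hlt
  have hdpos : 0 < ‖d‖ ^ 2 := by have := norm_pos_iff.mpr hdne; positivity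
  set t : ℝ := min 1 (⟪x - P x, d⟫ / ‖d‖ ^ 2) with ht
  have ht0 : 0 < t := lt_min one_pos (div_pos hlt hdpos)
  have ht1 : t ≤ 1 := min_le_left _ _
  have hz : P x + t • d ∈ C := by
    have := hC (hP x).1 hy (by linarith : (0:ℝ) ≤ 1 - t) ht0.le (by ring)
    convert this using 1
    rw [hd]
    module
  have hle := (hP x).2 (P x + t • d) hz
  have hexp : ‖x - (P x + t • d)‖ ^ 2
      = ‖x - P x‖ ^ 2 - 2 * t * ⟪x - P x, d⟫ + t ^ 2 * ‖d‖ ^ 2 := by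
    have : x - (P x + t • d) = (x - P x) - t • d := by abel
    rw [this, norm_sub_sq_real, real_inner_smul_right, norm_smul]
    simp [mul_pow]
    ring
  have hsq : ‖x - P x‖ ^ 2 ≤ ‖x - (P x + t • d)‖ ^ 2 := by
    apply pow_le_pow_left₀ (norm_nonneg _) hle
  rw [hexp] at hsq
  have h2 : 2 * ⟪x - P x, d⟫ ≤ t * ‖d‖ ^ 2 := by nlinarith
  have h3 : t * ‖d‖ ^ 2 ≤ ⟪x - P x, d⟫ := by
    have : t ≤ ⟪x - P x, d⟫ / ‖d‖ ^ 2 := min_le_right _ _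
    calc t * ‖d‖ ^ 2 ≤ (⟪x - P x, d⟫ / ‖d‖ ^ 2) * ‖d‖ ^ 2 := by nlinarith
    _ = ⟪x - P x, d⟫ := by field_simp
  linarith

lemma isProjOn_unique {C : Set (E n)} {P : E n → E n} (hP : IsProjOn C P)
    {x p : E n} (hpC : p ∈ C) (hvi : ∀ y ∈ C, ⟪x - p, y - p⟫ ≤ 0) : P x = p := by
  have h := hvi (P x) (hP x).1
  have hle := (hP x).2 p hpC
  have hexp : ‖x - P x‖ ^ 2
      = ‖x - p‖ ^ 2 - 2 * ⟪x - p, P x - p⟫ + ‖P x - p‖ ^ 2 := by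
    have : x - P x = (x - p) - (P x - p) := by abel
    rw [this, norm_sub_sq_real]
  have hsq : ‖x - P x‖ ^ 2 ≤ ‖x - p‖ ^ 2 :=
    pow_le_pow_left₀ (norm_nonneg _) hle 2
  have : ‖P x - p‖ ^ 2 ≤ 0 := by linarith
  have : ‖P x - p‖ = 0 := by nlinarith [norm_nonneg (P x - p)]
  rwa [norm_sub_eq_zero_iff] at this

lemma isProjOn_nonexpansive {C : Set (E n)} {P : E n → E n} (hC : Convex ℝ C)
    (hP : IsProjOn C P) (x y : E n) : ‖P x - P y‖ ≤ ‖x - y‖ := by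
  have h1 := isProjOn_varIneq hC hP x (hP y).1
  have h2 := isProjOn_varIneq hC hP y (hP x).1
  have key : ‖P x - P y‖ ^ 2 ≤ ⟪x - y, P x - P y⟫ := by
    have e1 : ⟪x - P x, P y - P x⟫ = -⟪x - P x, P x - P y⟫ := by
      rw [← inner_neg_right]; congr 1; abel
    have e2 : ⟪y - P y, P x - P y⟫ ≤ 0 := h2
    have : ⟪(x - y) - (P x - P y), P x - P y⟫ ≥ 0 := by
      have hsum : (x - y) - (P x - P y) = (x - P x) - (y - P y) := by abel
      rw [hsum, inner_sub_left]
      rw [e1] at h1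
      linarith
    rw [inner_sub_left, real_inner_self_eq_norm_sq] at this
    linarith
  have hub := real_inner_le_norm (x - y) (P x - P y)
  nlinarith [norm_nonneg (P x - P y), norm_nonneg (x - y)]

lemma isProjOn_continuous {C : Set (E n)} {P : E n → E n} (hC : Convex ℝ C)
    (hP : IsProjOn C P) : Continuous P := by
  refine (LipschitzWith.of_dist_le_mul (K := 1) fun x y => ?_).continuous
  rw [dist_eq_norm, dist_eq_norm, NNReal.coe_one, one_mul]
  exact isProjOn_nonexpansive hC hP x y

def coneF {ι : Type*} (a : ι → E n) (s : Finset ι) : Set (E n) :=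
  {x | ∃ c : ι → ℝ, (∀ i, 0 ≤ c i) ∧ x = ∑ i ∈ s, c i • a i}

lemma coneF_convex {ι : Type*} (a : ι → E n) (s : Finset ι) : Convex ℝ (coneF a s) := by
  rintro x ⟨c, hc, rfl⟩ y ⟨d, hd, rfl⟩ p q hp hq hpq
  refine ⟨fun i => p * c i + q * d i, fun i => add_nonneg (mul_nonneg hp (hc i)) (mul_nonneg hq (hd i)), ?_⟩
  have : ∀ i ∈ s, (p * c i + q * d i) • a i = p • (c i • a i) + q • (d i • a i) := by
    intro i _; rw [add_smul, mul_smul, mul_smul]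
  rw [Finset.sum_congr rfl this, Finset.sum_add_distrib, ← Finset.smul_sum, ← Finset.smul_sum]

lemma coneF_isClosed {ι : Type*} (a : ι → E n) (s : Finset ι) : IsClosed (coneF a s) := by
  classical
  induction s using Finset.strongInduction with
  | _ s ih =>
  by_cases hli : LinearIndependent ℝ (fun i : {x // x ∈ s} => a i)
  · set L : ({x // x ∈ s} → ℝ) →ₗ[ℝ] E n :=
      { toFun := fun c => ∑ i : {x // x ∈ s}, c i • a i.1,
        map_add' := by intro c d; simp [add_smul, Finset.sum_add_distrib],
        map_smul' := by intro r c; simp [mul_smul, Finset.smul_sum] } with hL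
    have hker : LinearMap.ker L = ⊥ := by
      rw [LinearMap.ker_eq_bot']
      intro c hc
      funext i
      exact Fintype.linearIndependent_iff.mp hli c hc i
    have hemb := LinearMap.isClosedEmbedding_of_injective hker
    have hcl : IsClosed {c : {x // x ∈ s} → ℝ | ∀ i, 0 ≤ c i} := by
      have : {c : {x // x ∈ s} → ℝ | ∀ i, 0 ≤ c i} = ⋂ i, {c | 0 ≤ c i} := by
        ext c; simp
      rw [this]
      exact isClosed_iInter fun i => isClosed_le continuous_const (continuous_apply i)
    have himg : coneF a s = L '' {c | ∀ i, 0 ≤ c i} := by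
      ext x
      constructor
      · rintro ⟨c, hc, rfl⟩
        refine ⟨fun i => c i.1, fun i => hc i.1, ?_⟩
        show ∑ i : {x // x ∈ s}, c i.1 • a i.1 = _
        rw [Finset.univ_eq_attach, Finset.sum_attach s (fun i => c i • a i)]
      · rintro ⟨c, hc, rfl⟩
        refine ⟨fun i => if h : i ∈ s then c ⟨i, h⟩ else 0, fun i => by
          dsimp only; split
          · exact hc _
          · exact le_rfl, ?_⟩
        show _ = ∑ i ∈ s, (if h : i ∈ s then c ⟨i, h⟩ else 0) • a i
        rw [← Finset.sum_attach s (fun i => (if h : i ∈ s then c ⟨i, h⟩ else 0) • a i)]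
        show ∑ i : {x // x ∈ s}, c i • a i.1 = _
        rw [Finset.univ_eq_attach]
        apply Finset.sum_congr rfl
        intro i _
        rw [dif_pos i.2]
    rw [himg]
    exact hemb.isClosedMap _ hcl
  · obtain ⟨g0, hg0sum, i0, hg0i0⟩ := Fintype.not_linearIndependent_iff.mp hli
    obtain ⟨g1, hg1sum, hg1pos⟩ :
        ∃ g1 : {x // x ∈ s} → ℝ, (∑ i, g1 i • a i.1 = 0) ∧ ∃ i, 0 < g1 i := by
      by_cases hsgn : ∃ i, 0 < g0 i
      · exact ⟨g0, hg0sum, hsgn⟩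
      · push_neg at hsgn
        refine ⟨-g0, by simp only [Pi.neg_apply, neg_smul, Finset.sum_neg_distrib, hg0sum, neg_zero], i0, ?_⟩
        have := hsgn i0
        simp only [Pi.neg_apply]
        cases lt_or_eq_of_le this with
        | inl h => linarith
        | inr h => exact absurd h hg0i0
    set g : ι → ℝ := fun i => if h : i ∈ s then g1 ⟨i, h⟩ else 0 with hgdef
    have hgsum : ∑ i ∈ s, g i • a i = 0 := by
      rw [← Finset.sum_attach s (fun i => g i • a i)]
      rw [← hg1sum, ← Finset.univ_eq_attach]
      apply Finset.sum_congr rfl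
      intro i _
      rw [hgdef]; dsimp only; rw [dif_pos i.2]
    have hgpos : ∃ i ∈ s, 0 < g i := by
      obtain ⟨i, hi⟩ := hg1pos
      exact ⟨i.1, i.2, by rw [hgdef]; dsimp only; rw [dif_pos i.2]; exact hi⟩
    have hgzero : ∀ i ∉ s, g i = 0 := by
      intro i hi; rw [hgdef]; dsimp only; rw [dif_neg hi]
    have hcover : coneF a s
        = ⋃ i ∈ s.filter (fun i => 0 < g i), coneF a (s.erase i) := by
      ext x
      constructor
      · rintro ⟨c, hc, rfl⟩
        set S := s.filter (fun i => 0 < g i) with hS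
        have hSne : S.Nonempty := by
          obtain ⟨i, his, hgi⟩ := hgpos
          exact ⟨i, Finset.mem_filter.mpr ⟨his, hgi⟩⟩
        set t := S.inf' hSne (fun i => c i / g i) with htdef
        obtain ⟨i1, hi1S, hi1⟩ := Finset.exists_mem_eq_inf' hSne (fun i => c i / g i)
        have hi1s : i1 ∈ s := (Finset.mem_filter.mp hi1S).1
        have hgi1 : 0 < g i1 := (Finset.mem_filter.mp hi1S).2
        have ht0 : 0 ≤ t := by
          apply Finset.le_inf'
          intro i hiS
          exact div_nonneg (hc i) (Finset.mem_filter.mp hiS).2.le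
        have hkey : ∀ i, 0 ≤ c i - t * g i := by
          intro i
          by_cases his : i ∈ s
          · by_cases hgi : 0 < g i
            · have hle : t ≤ c i / g i :=
                Finset.inf'_le _ (Finset.mem_filter.mpr ⟨his, hgi⟩)
              rw [le_div_iff₀ hgi] at hle; linarith
            · push_neg at hgi; nlinarith [hc i]
          · rw [hgzero i his]; simpa using hc i
        have hzero : c i1 - t * g i1 = 0 := by
          rw [← htdef] at hi1
          rw [hi1]; field_simp; ring
        have hsum2 : ∑ i ∈ s, (c i - t * g i) • a i = ∑ i ∈ s, c i • a i := by
          have he : ∀ i ∈ s, (c i - t * g i) • a i = c i • a i - t • (g i • a i) := by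
            intro i _; rw [sub_smul, smul_smul]
          rw [Finset.sum_congr rfl he, Finset.sum_sub_distrib, ← Finset.smul_sum, hgsum,
            smul_zero, sub_zero]
        have hsum3 : ∑ i ∈ s.erase i1, (c i - t * g i) • a i
            = ∑ i ∈ s, (c i - t * g i) • a i := by
          apply Finset.sum_subset (Finset.erase_subset _ _)
          intro j hjs hjne
          have hj : j = i1 := by
            by_contra hne; exact hjne (Finset.mem_erase.mpr ⟨hne, hjs⟩)
          subst hj; rw [hzero, zero_smul]
        exact Set.mem_biUnion hi1S ⟨fun i => c i - t * g i, hkey, by rw [hsum3, hsum2]⟩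
      · intro hx
        simp only [Set.mem_iUnion] at hx
        obtain ⟨i, hiS, c, hc, rfl⟩ := hx
        refine ⟨fun j => if j ∈ s.erase i then c j else 0, fun j => by
          dsimp only; split
          · exact hc _
          · exact le_rfl, ?_⟩
        rw [← Finset.sum_subset (Finset.erase_subset i s) (by
          intro j hjs hjne
          simp only [if_neg hjne, zero_smul])]
        apply Finset.sum_congr rfl
        intro j hj
        simp only [if_pos hj]
    rw [hcover]
    apply Set.Finite.isClosed_biUnion (Finset.finite_toSet _)
    intro i hi
    have his : i ∈ s := (Finset.mem_filter.mp hi).1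
    exact ih _ (Finset.erase_ssubset his)

lemma farkas {ι : Type*} [Fintype ι] (a : ι → E n) (v : E n)
    (h : ∀ w : E n, (∀ i, ⟪a i, w⟫ ≤ 0) → ⟪v, w⟫ ≤ 0) :
    ∃ c : ι → ℝ, (∀ i, 0 ≤ c i) ∧ v = ∑ i, c i • a i := by
  classical
  by_contra hv
  have hvD : v ∉ coneF a Finset.univ := fun ⟨c, hc, hvc⟩ => hv ⟨c, hc, hvc⟩
  obtain ⟨f, u0, hfD, hfv⟩ :=
    geometric_hahn_banach_closed_point (coneF_convex a _) (coneF_isClosed a _) hvD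
  set w := (InnerProductSpace.toDual ℝ (E n)).symm f with hw
  have hwf : ∀ y, ⟪w, y⟫ = f y := fun y => InnerProductSpace.toDual_symm_apply
  have h0 : (0 : E n) ∈ coneF a Finset.univ := ⟨0, fun i => le_refl 0, by simp⟩
  have hu0 : 0 < u0 := by have := hfD 0 h0; simpa using this
  have hfa : ∀ i, f (a i) ≤ 0 := by
    intro i
    by_contra hpos
    push_neg at hpos
    have hmem : ∀ r : ℝ, 0 ≤ r → r • a i ∈ coneF a Finset.univ := by
      intro r hr
      refine ⟨fun j => if j = i then r else 0, fun j => by dsimp only; split <;> simp [hr], ?_⟩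
      simp [ite_smul, Finset.sum_ite_eq']
    have hlt := hfD _ (hmem (u0 / f (a i)) (by positivity))
    rw [f.map_smul, smul_eq_mul, div_mul_cancel₀ _ (ne_of_gt hpos)] at hlt
    exact lt_irrefl u0 hlt
  have hwa : ∀ i, ⟪a i, w⟫ ≤ 0 := by
    intro i; rw [real_inner_comm, hwf]; exact hfa i
  have hvw := h w hwa
  rw [real_inner_comm] at hvw
  rw [hwf] at hvw
  linarith

lemma key_eventually {C : Set (E n)} {m : ℕ} {a : Fin m → E n} {b : Fin m → ℝ}
    (hC : C = {u : E n | ∀ j, ⟪a j, u⟫ ≤ b j}) {P : E n → E n} (hP : IsProjOn C P)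
    (θs : E n) {K : Set (E n)}
    (hKdef : K = tanCone C (P θs) ∩ {u : E n | ⟪u, θs - P θs⟫ = 0})
    {PK : E n → E n} (hPK : IsProjOn K PK) (z : E n) :
    ∀ᶠ σ in 𝓝[>] (0:ℝ), P (θs + σ • z) = P θs + σ • PK z := by
  classical
  have hCconv : Convex ℝ C := by
    rw [hC]
    rintro x hx y hy p q hp hq hpq j
    simp only [Set.mem_setOf_eq] at hx hy ⊢
    rw [inner_add_right, real_inner_smul_right, real_inner_smul_right]
    have hb : p * b j + q * b j = b j := by rw [← add_mul, hpq, one_mul]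
    nlinarith [mul_le_mul_of_nonneg_left (hx j) hp, mul_le_mul_of_nonneg_left (hy j) hq]
  set x0 := P θs with hx0def
  set v := θs - x0 with hvdef
  have hx0C : x0 ∈ C := (hP θs).1
  have hx0b : ∀ j, ⟪a j, x0⟫ ≤ b j := by rw [hC] at hx0C; exact hx0C
  set T := {w : E n | ∀ j, ⟪a j, x0⟫ = b j → ⟪a j, w⟫ ≤ 0} with hTdef
  have hmemC : ∀ w ∈ T, ∀ᶠ δ in 𝓝[>] (0:ℝ), x0 + δ • w ∈ C := by
    intro w hw
    have hall : ∀ j, ∀ᶠ δ in 𝓝[>] (0:ℝ), ⟪a j, x0 + δ • w⟫ ≤ b j := by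
      intro j
      by_cases hj : ⟪a j, x0⟫ = b j
      · filter_upwards [self_mem_nhdsWithin] with δ hδ
        rw [inner_add_right, real_inner_smul_right, hj]
        have h1 := hw j hj
        have h2 : δ * ⟪a j, w⟫ ≤ 0 :=
          mul_nonpos_of_nonneg_of_nonpos (le_of_lt hδ) h1
        linarith
      · have hlt : ⟪a j, x0⟫ < b j := lt_of_le_of_ne (hx0b j) hj
        have hcont : Tendsto (fun δ : ℝ => ⟪a j, x0 + δ • w⟫) (𝓝[>] 0) (𝓝 ⟪a j, x0⟫) := by
          have hc : Continuous fun δ : ℝ => ⟪a j, x0 + δ • w⟫ :=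
            continuous_const.inner (continuous_const.add (continuous_id.smul continuous_const))
          have h0 : ⟪a j, x0 + (0:ℝ) • w⟫ = ⟪a j, x0⟫ := by simp
          exact h0 ▸ (hc.tendsto 0).mono_left nhdsWithin_le_nhds
        exact hcont.eventually (eventually_le_nhds hlt)
      -- end
    have := eventually_all.mpr hall
    filter_upwards [this] with δ hδ
    rw [hC]
    exact hδ
  have hT : tanCone C x0 = T := by
    apply subset_antisymm
    · apply closure_minimal _ ?_
      · rintro u ⟨α, hα, θ, hθ, rfl⟩
        intro j hj
        rw [real_inner_smul_right, inner_sub_right, hj]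
        have hb : ⟪a j, θ⟫ ≤ b j := by rw [hC] at hθ; exact hθ j
        exact mul_nonpos_of_nonneg_of_nonpos hα (by linarith)
      · have : T = ⋂ j, {w : E n | ⟪a j, x0⟫ = b j → ⟪a j, w⟫ ≤ 0} := by
          ext w; simp [hTdef]
        rw [this]
        apply isClosed_iInter
        intro j
        by_cases hj : ⟪a j, x0⟫ = b j
        · have : {w : E n | ⟪a j, x0⟫ = b j → ⟪a j, w⟫ ≤ 0} = {w : E n | ⟪a j, w⟫ ≤ 0} := by
            ext w
            simp only [Set.mem_setOf_eq]
            exact ⟨fun h => h hj, fun h _ => h⟩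
          rw [this]
          exact isClosed_le (continuous_const.inner continuous_id) continuous_const
        · have : {w : E n | ⟪a j, x0⟫ = b j → ⟪a j, w⟫ ≤ 0} = Set.univ := by
            ext w
            simp only [Set.mem_setOf_eq, Set.mem_univ, iff_true]
            exact fun h => absurd h hj
          rw [this]
          exact isClosed_univ
    · intro w hw
      obtain ⟨δ, hmem, hpos⟩ := ((hmemC w hw).and self_mem_nhdsWithin).exists
      apply subset_closure
      refine ⟨δ⁻¹, by positivity, x0 + δ • w, hmem, ?_⟩
      rw [add_sub_cancel_left, smul_smul, inv_mul_cancel₀ (ne_of_gt hpos), one_smul]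
  have hvT : ∀ w ∈ T, ⟪v, w⟫ ≤ 0 := by
    intro w hw
    obtain ⟨δ, hmem, hpos⟩ := ((hmemC w hw).and self_mem_nhdsWithin).exists
    have hvi := isProjOn_varIneq hCconv hP θs hmem
    rw [← hx0def, add_sub_cancel_left, real_inner_smul_right, ← hvdef] at hvi
    nlinarith
  have hKrep : K = {w : E n | (∀ j, ⟪a j, x0⟫ = b j → ⟪a j, w⟫ ≤ 0) ∧ ⟪w, v⟫ = 0} := by
    rw [hKdef, hT]
    ext w
    simp only [Set.mem_inter_iff, Set.mem_setOf_eq, hTdef]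
  have hKconv : Convex ℝ K := by
    rw [hKrep]
    rintro x ⟨hx1, hx2⟩ y ⟨hy1, hy2⟩ p q hp hq hpq
    constructor
    · intro j hj
      rw [inner_add_right, real_inner_smul_right, real_inner_smul_right]
      have h1 := hx1 j hj
      have h2 := hy1 j hj
      nlinarith
    · rw [inner_add_left, real_inner_smul_left, real_inner_smul_left, hx2, hy2]
      ring
  set u := PK z with hudef
  have huK : u ∈ K := (hPK z).1
  have huKr := huK
  rw [hKrep] at huKr
  obtain ⟨huT, huv⟩ := huKr
  have varK : ∀ k ∈ K, ⟪z - u, k - u⟫ ≤ 0 := fun k hk => isProjOn_varIneq hKconv hPK z hk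
  have h0K : (0 : E n) ∈ K := by
    rw [hKrep]
    exact ⟨fun j hj => by simp, by simp⟩
  have h2u : (2:ℝ) • u ∈ K := by
    rw [hKrep]
    constructor
    · intro j hj
      rw [real_inner_smul_right]
      nlinarith [huT j hj]
    · rw [real_inner_smul_left, huv]; ring
  have hzu_u : ⟪z - u, u⟫ = 0 := by
    have h1 := varK 0 h0K
    rw [zero_sub, inner_neg_right] at h1
    have h2 := varK _ h2u
    have he : (2:ℝ) • u - u = u := by module
    rw [he] at h2
    linarith
  have hzuK : ∀ k ∈ K, ⟪z - u, k⟫ ≤ 0 := by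
    intro k hk
    have h1 := varK k hk
    rw [inner_sub_right, hzu_u] at h1
    linarith
  -- Farkas
  set fam : {j : Fin m // ⟪a j, x0⟫ = b j} ⊕ Bool → E n :=
    Sum.elim (fun j => a j.1) (fun s => if s then v else -v) with hfam
  have hFhyp : ∀ w : E n, (∀ i, ⟪fam i, w⟫ ≤ 0) → ⟪z - u, w⟫ ≤ 0 := by
    intro w hiw
    apply hzuK
    rw [hKrep]
    constructor
    · intro j hj
      exact hiw (Sum.inl ⟨j, hj⟩)
    · have h1 := hiw (Sum.inr true)
      have h2 := hiw (Sum.inr false)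
      simp only [hfam, Sum.elim_inr, if_true, Bool.false_eq_true, if_false,
        inner_neg_left] at h1 h2
      rw [real_inner_comm]
      linarith
  obtain ⟨c, hc, hdecomp⟩ := farkas fam (z - u) hFhyp
  rw [Fintype.sum_sum_type] at hdecomp
  set t : ℝ := c (Sum.inr true) - c (Sum.inr false) with htdef
  have hdec2 : z - u = (∑ j : {j : Fin m // ⟪a j, x0⟫ = b j}, c (Sum.inl j) • a j.1) + t • v := by
    rw [hdecomp]
    congr 1
    rw [Fintype.sum_bool]
    simp only [hfam, Sum.elim_inr, if_true, Bool.false_eq_true, if_false, smul_neg]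
    rw [htdef, sub_smul]
    abel
  have hineq : ∀ w ∈ T, ⟪z - u, w⟫ ≤ t * ⟪v, w⟫ := by
    intro w hw
    rw [hdec2, inner_add_left, real_inner_smul_left]
    have hsum : ⟪∑ j : {j : Fin m // ⟪a j, x0⟫ = b j}, c (Sum.inl j) • a j.1, w⟫ ≤ 0 := by
      rw [sum_inner]
      apply Finset.sum_nonpos
      intro j _
      rw [real_inner_smul_left]
      exact mul_nonpos_of_nonneg_of_nonpos (hc _) (hw j.1 j.2)
    linarith
  have hevent2 : ∀ᶠ σ in 𝓝[>] (0:ℝ), 0 ≤ 1 + σ * t := by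
    have hcont : Tendsto (fun σ : ℝ => 1 + σ * t) (𝓝 0) (𝓝 1) := by
      have hcc : Continuous (fun σ : ℝ => 1 + σ * t) := by fun_prop
      have h := hcc.tendsto (0:ℝ)
      simpa using h
    exact ((hcont.mono_left nhdsWithin_le_nhds).eventually
      (eventually_ge_nhds (by norm_num : (0:ℝ) < 1)))
  filter_upwards [hmemC u huT, hevent2, self_mem_nhdsWithin] with σ hmem h1t hσ
  rw [Set.mem_Ioi] at hσ
  apply isProjOn_unique hP hmem
  intro y hy
  have hyT : y - x0 ∈ T := by
    intro j hj
    rw [inner_sub_right, hj]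
    rw [hC] at hy
    have := hy j
    linarith
  have hrw1 : θs + σ • z - (x0 + σ • u) = v + σ • (z - u) := by
    rw [hvdef]; module
  have hrw2 : y - (x0 + σ • u) = (y - x0) - σ • u := by module
  rw [hrw1, hrw2]
  have hexp : ⟪v + σ • (z - u), (y - x0) - σ • u⟫
      = ⟪v, y - x0⟫ + σ * ⟪z - u, y - x0⟫ - σ * ⟪v, u⟫ - σ^2 * ⟪z - u, u⟫ := by
    simp only [inner_add_left, inner_sub_right, real_inner_smul_left, real_inner_smul_right]
    ring
  rw [hexp, hzu_u]
  have hvu : ⟪v, u⟫ = 0 := by rw [real_inner_comm]; exact huv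
  rw [hvu]
  have h1 := hineq _ hyT
  have h2 := hvT _ hyT
  nlinarith [mul_le_mul_of_nonneg_left h1 (le_of_lt hσ),
    mul_nonpos_of_nonneg_of_nonpos h1t h2]
/-- `P` is the metric projection onto `C`. -/

theorem stmt10 {n : ℕ} (C : Set (E n)) (hne : C.Nonempty)
    (hpoly : ∃ (m : ℕ) (a : Fin m → E n) (b : Fin m → ℝ),
      C = {u : E n | ∀ j, ⟪a j, u⟫ ≤ b j})
    (P : E n → E n) (hP : IsProjOn C P) (θs : E n)
    {Ω : Type*} [MeasurableSpace Ω] (μ : Measure Ω) [IsProbabilityMeasure μ]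
    (Z : Ω → E n) (hZm : AEMeasurable Z μ) (hZ1 : Integrable Z μ)
    (hmean : ∫ ω, Z ω ∂μ = 0) (hZ2 : Integrable (fun ω => ‖Z ω‖ ^ 2) μ)
    (K : Set (E n))
    (hKdef : K = tanCone C (P θs) ∩ {u : E n | ⟪u, θs - P θs⟫ = 0})
    (PK : E n → E n) (hPK : IsProjOn K PK) :
    Tendsto
      (fun σ : ℝ => (1 / σ ^ 2) * ∫ ω, ‖P (θs + σ • Z ω) - P θs‖ ^ 2 ∂μ)
      (𝓝[>] 0) (𝓝 (∫ ω, ‖PK (Z ω)‖ ^ 2 ∂μ)) := by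
  obtain ⟨m, a, b, hC⟩ := hpoly
  have hCconv : Convex ℝ C := by
    rw [hC]
    rintro x hx y hy p q hp hq hpq j
    simp only [Set.mem_setOf_eq] at hx hy ⊢
    rw [inner_add_right, real_inner_smul_right, real_inner_smul_right]
    have hb : p * b j + q * b j = b j := by rw [← add_mul, hpq, one_mul]
    nlinarith [mul_le_mul_of_nonneg_left (hx j) hp, mul_le_mul_of_nonneg_left (hy j) hq]
  have hPcont : Continuous P := isProjOn_continuous hCconv hP
  have hrw : ∀ σ : ℝ, (1 / σ ^ 2) * ∫ ω, ‖P (θs + σ • Z ω) - P θs‖ ^ 2 ∂μ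
      = ∫ ω, (1 / σ ^ 2) * ‖P (θs + σ • Z ω) - P θs‖ ^ 2 ∂μ := fun σ =>
    (integral_const_mul _ _).symm
  simp only [hrw]
  apply tendsto_integral_filter_of_dominated_convergence (fun ω => ‖Z ω‖ ^ 2)
  · apply Eventually.of_forall
    intro σ
    have hcont : Continuous fun x : E n => (1 / σ ^ 2) * ‖P (θs + σ • x) - P θs‖ ^ 2 :=
      continuous_const.mul (((hPcont.comp
        (continuous_const.add (continuous_id.const_smul σ))).sub continuous_const).norm.pow 2)
    exact (hcont.measurable.comp_aemeasurable hZm).aestronglyMeasurable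
  · filter_upwards [self_mem_nhdsWithin] with σ hσ
    rw [Set.mem_Ioi] at hσ
    apply Eventually.of_forall
    intro ω
    have hnex := isProjOn_nonexpansive hCconv hP (θs + σ • Z ω) θs
    rw [add_sub_cancel_left, norm_smul, Real.norm_eq_abs, abs_of_pos hσ] at hnex
    have h2 : ‖P (θs + σ • Z ω) - P θs‖ ^ 2 ≤ σ ^ 2 * ‖Z ω‖ ^ 2 := by
      have := pow_le_pow_left₀ (norm_nonneg _) hnex 2
      rwa [mul_pow] at this
    have hσ2 : (0:ℝ) < σ ^ 2 := by positivity
    rw [Real.norm_eq_abs, abs_of_nonneg (by positivity)]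
    rw [one_div, inv_mul_le_iff₀ hσ2]
    exact h2.trans (le_of_eq (by ring))
  · exact hZ2
  · apply Eventually.of_forall
    intro ω
    have hev := key_eventually hC hP θs hKdef hPK (Z ω)
    have hevEq : (fun σ : ℝ => (1 / σ ^ 2) * ‖P (θs + σ • Z ω) - P θs‖ ^ 2) =ᶠ[𝓝[>] (0:ℝ)]
        (fun _ => ‖PK (Z ω)‖ ^ 2) := by
      filter_upwards [hev, self_mem_nhdsWithin] with σ hPeq hσ
      rw [Set.mem_Ioi] at hσ
      rw [hPeq, add_sub_cancel_left, norm_smul, Real.norm_eq_abs, abs_of_pos hσ, mul_pow]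
      field_simp
    exact Tendsto.congr' hevEq.symm tendsto_const_nhds
end
end

section
/- Let I_1,...,I_m partition {1,...,n} into consecutive blocks. The block monotone cone S_{|I_1|,...,|I_m|} = {u ∈ R^n : u nondecreasing, constant on each I_j} is isometric (via an orthogonal transformation of R^n followed by restriction to a coordinate subspace) to the cone {v ∈ R^m : v_1/√|I_1| ≤ v_2/√|I_2| ≤ ... ≤ v_m/√|I_m|} ⊆ R^m. -/
open Set MeasureTheory Filter Metric
open scoped RealInnerProductSpace Topology

noncomputable section

theorem stmt15 {n m : ℕ} (hmn : m ≤ n) (b : Fin n → Fin m) (hmono : Monotone b)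
    (hsurj : Function.Surjective b)
    (S : Set (E n))
    (hS : S = {u : E n | (∀ i i' : Fin n, i ≤ i' → u i ≤ u i') ∧
        ∀ i i' : Fin n, b i = b i' → u i = u i'})
    (w : Fin m → ℕ) (hw : ∀ j, w j = (Finset.univ.filter fun i => b i = j).card) :
    ∃ Q : E n ≃ₗᵢ[ℝ] E n,
      Q '' S = {v : E n |
        (∀ j j' : Fin m, j ≤ j' →
          v (Fin.castLE hmn j) / Real.sqrt (w j) ≤ v (Fin.castLE hmn j') / Real.sqrt (w j')) ∧
        ∀ i : Fin n, (∀ j : Fin m, Fin.castLE hmn j ≠ i) → v i = 0} := by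
  subst hS
  have hwpos : ∀ j, 0 < (w j : ℝ) := by
    intro j
    obtain ⟨i, hi⟩ := hsurj j
    have : 0 < (Finset.univ.filter fun i => b i = j).card :=
      Finset.card_pos.mpr ⟨i, by simp [hi]⟩
    rw [hw j]; exact_mod_cast this
  set sq : Fin m → ℝ := fun j => Real.sqrt (w j) with hsq
  have hsqpos : ∀ j, 0 < sq j := fun j => Real.sqrt_pos.mpr (hwpos j)
  have hsqsq : ∀ j, sq j * sq j = (w j : ℝ) := fun j => Real.mul_self_sqrt (hwpos j).le
  -- normalized block indicators
  set g : Fin m → E n := fun j => WithLp.toLp 2 (fun k => if b k = j then (sq j)⁻¹ else 0) with hgdef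
  have hg_apply : ∀ j k, g j k = if b k = j then (sq j)⁻¹ else 0 := fun _ _ => rfl
  have hinner : ∀ j j' : Fin m, ⟪g j, g j'⟫ = if j = j' then 1 else 0 := by
    intro j j'
    rw [PiLp.inner_apply]
    simp only [RCLike.inner_apply, hg_apply, starRingEnd_apply, star_trivial]
    by_cases h : j = j'
    · subst h
      rw [if_pos rfl]
      have h1 : (∑ k : Fin n, (if b k = j then (sq j)⁻¹ else 0) * (if b k = j then (sq j)⁻¹ else 0))
          = (w j : ℝ) * ((sq j)⁻¹ * (sq j)⁻¹) := by
        rw [Finset.sum_congr rfl (fun k _ => (by split_ifs <;> ring :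
          (if b k = j then (sq j)⁻¹ else 0) * (if b k = j then (sq j)⁻¹ else 0)
            = if b k = j then (sq j)⁻¹ * (sq j)⁻¹ else 0)), ← Finset.sum_filter,
          Finset.sum_const, hw j, nsmul_eq_mul]
      rw [h1, ← hsqsq]
      field_simp
      exact div_self (hsqpos j).ne'
    · rw [if_neg h]
      refine Finset.sum_eq_zero fun k _ => ?_
      split_ifs with h1 h2
      · exact absurd (h2.symm.trans h1) h
      all_goals ring
  -- extend to an orthonormal basis
  set s : Set (Fin n) := {i : Fin n | (i : ℕ) < m} with hsdef
  set v : Fin n → E n := fun i => if h : (i : ℕ) < m then g ⟨i, h⟩ else 0 with hvdef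
  have hvon : Orthonormal ℝ (s.restrict v) := by
    rw [orthonormal_iff_ite]
    rintro ⟨p, hp⟩ ⟨q, hq⟩
    simp only [Set.restrict_apply, hvdef]
    show ⟪(if h : (p:ℕ) < m then g ⟨p, h⟩ else 0), (if h : (q:ℕ) < m then g ⟨q, h⟩ else 0)⟫ = _
    rw [dif_pos (show (p:ℕ) < m from hp), dif_pos (show (q:ℕ) < m from hq), hinner]
    congr 1
    simp [Fin.ext_iff, Subtype.ext_iff]
  obtain ⟨B, hB⟩ := Orthonormal.exists_orthonormalBasis_extension_of_card_eq
    (by simp [finrank_euclideanSpace_fin]) hvon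
  have hBj : ∀ j : Fin m, B (Fin.castLE hmn j) = g j := by
    intro j
    have h1 : (Fin.castLE hmn j : Fin n) ∈ s := j.isLt
    rw [hB _ h1]
    simp only [hvdef]
    rw [dif_pos (show ((Fin.castLE hmn j : Fin n) : ℕ) < m from j.isLt)]
    rfl
  -- choice of representatives
  set pick : Fin m → Fin n := fun j => (hsurj j).choose with hpickdef
  have hpick : ∀ j, b (pick j) = j := fun j => (hsurj j).choose_spec
  have hBon := B.orthonormal
  rw [orthonormal_iff_ite] at hBon
  refine ⟨B.repr, ?_⟩
  ext x
  simp only [Set.mem_image, Set.mem_setOf_eq]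
  constructor
  · rintro ⟨u, ⟨humono, hueq⟩, rfl⟩
    -- decomposition of u
    have hu_sum : u = ∑ j : Fin m, (sq j * u (pick j)) • g j := by
      ext k
      rw [WithLp.ofLp_sum, Finset.sum_apply]
      rw [Finset.sum_eq_single (b k)]
      · simp only [PiLp.smul_apply, hg_apply, eq_self_iff_true, if_true, smul_eq_mul]
        rw [hueq k (pick (b k)) (hpick (b k)).symm]
        rw [mul_comm (sq (b k)), mul_assoc, mul_inv_cancel₀ (hsqpos (b k)).ne', mul_one]
      · intro j _ hj
        simp [PiLp.smul_apply, hg_apply, Ne.symm hj]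
      · intro h; exact absurd (Finset.mem_univ _) h
    have key : ∀ (i : Fin n), ⟪B i, u⟫ = ∑ j : Fin m, (sq j * u (pick j)) * ⟪B i, g j⟫ := by
      intro i
      conv_lhs => rw [hu_sum]
      rw [inner_sum]
      exact Finset.sum_congr rfl fun j _ => real_inner_smul_right _ _ _
    have hrepr : ∀ j : Fin m, B.repr u (Fin.castLE hmn j) = sq j * u (pick j) := by
      intro j
      rw [B.repr_apply_apply, key]
      rw [Finset.sum_eq_single j]
      · rw [← hBj j, hBon, if_pos rfl, mul_one]
      · intro j' _ hj'
        rw [← hBj j', hBon, if_neg (fun h => hj' (Fin.castLE_injective hmn h).symm), mul_zero]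
      · intro h; exact absurd (Finset.mem_univ _) h
    constructor
    · intro j j' hjj'
      rw [hrepr j, hrepr j', mul_comm (sq j), mul_comm (sq j'),
        mul_div_assoc, mul_div_assoc, div_self (hsqpos j).ne', div_self (hsqpos j').ne',
        mul_one, mul_one]
      rcases eq_or_lt_of_le hjj' with h | h
      · exact le_of_eq (hueq _ _ (by rw [hpick, hpick, h]))
      · refine humono _ _ ?_
        by_contra hlt
        push_neg at hlt
        have h2 := hmono hlt.le
        rw [hpick, hpick] at h2
        exact absurd h2 (not_le.mpr h)
    · intro i hi
      rw [B.repr_apply_apply, key]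
      refine Finset.sum_eq_zero fun j _ => ?_
      rw [← hBj j, hBon, if_neg (fun h => hi j h.symm), mul_zero]
  · intro ⟨hx1, hx2⟩
    refine ⟨B.repr.symm x, ?_, B.repr.apply_symm_apply x⟩
    set u : E n := B.repr.symm x with hudef
    have hu_sum : u = ∑ j : Fin m, x (Fin.castLE hmn j) • g j := by
      rw [hudef, ← B.sum_repr_symm]
      rw [← Finset.sum_subset (Finset.subset_univ ((Finset.univ : Finset (Fin m)).image
        (Fin.castLE hmn)))]
      · rw [Finset.sum_image (fun a _ a' _ h => by
          simpa [Fin.ext_iff] using h)]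
        exact Finset.sum_congr rfl fun j _ => by rw [hBj]
      · intro i _ hi
        have : ∀ j : Fin m, Fin.castLE hmn j ≠ i := by
          intro j hji
          exact hi (Finset.mem_image.mpr ⟨j, Finset.mem_univ _, hji⟩)
        rw [hx2 i this, zero_smul]
    have hu_apply : ∀ k, u k = x (Fin.castLE hmn (b k)) * (sq (b k))⁻¹ := by
      intro k
      rw [hu_sum]
      rw [WithLp.ofLp_sum, Finset.sum_apply]
      rw [Finset.sum_eq_single (b k)]
      · simp [PiLp.smul_apply, hg_apply]
      · intro j _ hj
        simp [PiLp.smul_apply, hg_apply, Ne.symm hj]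
      · intro h; exact absurd (Finset.mem_univ _) h
    constructor
    · intro i i' hii'
      rw [hu_apply i, hu_apply i']
      have := hx1 (b i) (b i') (hmono hii')
      rw [div_eq_mul_inv, div_eq_mul_inv] at this
      exact this
    · intro i i' hbi
      rw [hu_apply i, hu_apply i', hbi]
end
end

section
/- Let A be the n×n lower bidiagonal matrix with 1's on the diagonal and -1's on the subdiagonal. In the (unique) QR decomposition A = QR with Q orthogonal and R upper triangular with positive diagonal entries, the bottom-right entry of R equals 1/√n. -/
open Set MeasureTheory Filter Metric
open scoped RealInnerProductSpace Topology

open Matrix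

noncomputable section

theorem stmt16 {n : ℕ} (hn : 0 < n)
    (A Q R : Matrix (Fin n) (Fin n) ℝ)
    (hA : A = Matrix.of fun i j : Fin n => if i = j then (1:ℝ) else if (i : ℕ) = (j : ℕ) + 1 then -1 else 0)
    (hQ : Q ∈ Matrix.orthogonalGroup (Fin n) ℝ)
    (hR : R.BlockTriangular id)  -- upper triangular: R i j = 0 for j < i
    (hRdiag : ∀ i, 0 < R i i)
    (hQR : A = Q * R) :
    R ⟨n - 1, Nat.sub_lt hn one_pos⟩ ⟨n - 1, Nat.sub_lt hn one_pos⟩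
      = 1 / Real.sqrt n := by
  set m : Fin n := ⟨n - 1, Nat.sub_lt hn one_pos⟩ with hm
  set B : Matrix (Fin n) (Fin n) ℝ :=
    Matrix.of (fun i j : Fin n => if (j : ℕ) ≤ (i : ℕ) then (1:ℝ) else 0) with hB
  -- A * B = 1
  have hAB : A * B = 1 := by
    ext i j
    rw [Matrix.mul_apply]
    simp only [hA, hB, Matrix.of_apply, Matrix.one_apply]
    by_cases h0 : (i : ℕ) = 0
    · rw [Finset.sum_eq_single i]
      · by_cases hij : i = j
        · subst hij; simp
        · have hj : ¬ ((j:ℕ) ≤ (i:ℕ)) := by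
            rw [Fin.ext_iff] at hij; omega
          simp [hij, hj]
      · intro k _ hk
        have h1 : i ≠ k := fun h => hk h.symm
        have h2 : (i : ℕ) ≠ (k : ℕ) + 1 := by omega
        simp [h1, h2]
      · simp
    · set p : Fin n := ⟨(i:ℕ) - 1, by omega⟩ with hp
      have hip : i ≠ p := by
        intro h; rw [Fin.ext_iff] at h; simp [hp] at h; omega
      have hpi : (i : ℕ) = (p : ℕ) + 1 := by simp [hp]; omega
      rw [Finset.sum_eq_add_of_mem i p (Finset.mem_univ _) (Finset.mem_univ _) hip]
      · have hip' : ¬ (i = p) := hip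
        rw [if_pos rfl, if_neg hip', if_pos hpi]
        simp only [Fin.ext_iff]
        rcases lt_trichotomy (i:ℕ) (j:ℕ) with h | h | h
        · have h1 : ¬ ((j:ℕ) ≤ (i:ℕ)) := by omega
          have h2 : ¬ ((j:ℕ) ≤ (p:ℕ)) := by omega
          have h3 : ¬ ((i:ℕ) = (j:ℕ)) := by omega
          simp [h1, h2, h3]
        · have h2 : ¬ ((j:ℕ) ≤ (p:ℕ)) := by omega
          have h1 : (j:ℕ) ≤ (i:ℕ) := le_of_eq h.symm
          rw [if_pos h1, if_neg h2, if_pos h]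
          ring
        · have h1 : (j:ℕ) ≤ (i:ℕ) := by omega
          have h2 : (j:ℕ) ≤ (p:ℕ) := by omega
          have h3 : ¬ ((i:ℕ) = (j:ℕ)) := by omega
          simp [h1, h2, h3]
      · intro k _ hk
        obtain ⟨hk1, hk2⟩ := hk
        have h1 : i ≠ k := fun h => hk1 h.symm
        have h2 : (i : ℕ) ≠ (k : ℕ) + 1 := by
          intro h
          apply hk2
          rw [Fin.ext_iff]; simp [hp]; omega
        simp [h1, h2]
  -- Qᵀ * Q = 1
  have hQtQ : Qᵀ * Q = 1 := by
    have := (Matrix.mem_orthogonalGroup_iff' (n := Fin n) (R := ℝ)).mp hQ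
    simpa [Matrix.star_eq_conjTranspose, Matrix.conjTranspose_eq_transpose_of_trivial] using this
  -- R * B = Qᵀ
  have hRB : R * B = Qᵀ := by
    have h1 : Qᵀ * A = R := by
      rw [hQR, ← Matrix.mul_assoc, hQtQ, Matrix.one_mul]
    calc R * B = Qᵀ * A * B := by rw [h1]
    _ = Qᵀ * (A * B) := Matrix.mul_assoc _ _ _
    _ = Qᵀ := by rw [hAB, Matrix.mul_one]
  -- orthogonality of rows
  have horth : (R * B) * (R * B)ᵀ = 1 := by
    rw [hRB, Matrix.transpose_transpose, hQtQ]
  -- last row of R*B is constant R m m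
  have hrow : ∀ j : Fin n, (R * B) m j = R m m := by
    intro j
    rw [Matrix.mul_apply]
    rw [Finset.sum_eq_single m]
    · have hjm : (j : ℕ) ≤ (m : ℕ) := by
        have := j.isLt; simp [hm]; omega
      rw [hB]
      simp only [Matrix.of_apply]
      rw [if_pos hjm, mul_one]
    · intro k _ hk
      have : (k : ℕ) < (m : ℕ) := by
        have := k.isLt
        have : (k : ℕ) ≠ (m : ℕ) := fun h => hk (Fin.ext h)
        simp [hm] at *; omega
      rw [hR this, zero_mul]
    · simp
  have hdiag : ((R * B) * (R * B)ᵀ) m m = 1 := by rw [horth]; simp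
  rw [Matrix.mul_apply] at hdiag
  simp only [Matrix.transpose_apply, hrow] at hdiag
  rw [Finset.sum_const, Finset.card_univ, Fintype.card_fin, nsmul_eq_mul] at hdiag
  -- n * (R m m)^2 = 1
  have hn' : (0:ℝ) < n := by exact_mod_cast hn
  have hsq : (R m m)^2 = 1 / n := by
    field_simp at hdiag ⊢
    nlinarith [hdiag]
  have hpos : 0 < R m m := hRdiag m
  have hs : Real.sqrt ((R m m)^2) = R m m := Real.sqrt_sq hpos.le
  rw [← hs, hsq, one_div, Real.sqrt_inv, ← one_div]
end
end

section
/- Let C be a nonempty closed convex set in R^n, θ0 ∈ C, F = C - θ0 = {θ - θ0 : θ ∈ C}, and K_C = ∩_{θ∈C} T_C(θ) the core cone. Then for every x ∈ R^n, ‖Π_F(x)‖ ≥ ‖Π_{K_C}(x)‖. -/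
open Set MeasureTheory Filter Metric
open scoped RealInnerProductSpace Topology

noncomputable section

lemma proj_norm_eq_iInf {n : ℕ} {S : Set (E n)} {P : E n → E n}
    (hP : IsProjOn S P) (x : E n) : ‖x - P x‖ = ⨅ w : S, ‖x - w‖ := by
  obtain ⟨hmem, hmin⟩ := hP x
  haveI : Nonempty S := ⟨⟨P x, hmem⟩⟩
  refine le_antisymm (le_ciInf fun w => hmin w w.2) ?_
  exact ciInf_le ⟨0, by rintro r ⟨w, rfl⟩; exact norm_nonneg _⟩ (⟨P x, hmem⟩ : S)

lemma tanCone_convex {n : ℕ} {C : Set (E n)} (hconv : Convex ℝ C) (θ0 : E n) :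
    Convex ℝ (tanCone C θ0) := by
  apply Convex.closure
  rintro u ⟨α, hα, θ1, hθ1, rfl⟩ v ⟨β, hβ, θ2, hθ2, rfl⟩ a b ha hb hab
  set γ := a * α + b * β with hγ
  have hγ0 : 0 ≤ γ := by positivity
  rcases eq_or_lt_of_le hγ0 with h0 | h0
  · have h1 : a * α = 0 := by nlinarith
    have h2 : b * β = 0 := by nlinarith
    refine ⟨0, le_refl 0, θ1, hθ1, ?_⟩
    rw [smul_smul, smul_smul, h1, h2]
    simp
  · refine ⟨γ, hγ0, (a * α / γ) • θ1 + (b * β / γ) • θ2, ?_, ?_⟩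
    · exact hconv hθ1 hθ2 (by positivity) (by positivity)
        (by field_simp; exact hγ.symm)
    · rw [smul_smul, smul_smul]
      match_scalars <;> field_simp <;> ring
  
lemma mem_C_of_tanCone {n : ℕ} {C : Set (E n)} (hcl : IsClosed C) (hconv : Convex ℝ C)
    {v : E n} (hv : ∀ θ ∈ C, v ∈ tanCone C θ) {θ : E n} (hθ : θ ∈ C) :
    θ + v ∈ C := by
  have hCne : C.Nonempty := ⟨θ, hθ⟩
  obtain ⟨p, hpC, hpd⟩ := hcl.exists_infDist_eq_dist hCne (θ + v)
  have hinf : ‖(θ + v) - p‖ = ⨅ w : C, ‖(θ + v) - w‖ := by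
    rw [← dist_eq_norm, ← hpd, infDist_eq_iInf]
    simp [dist_eq_norm]
  have hVI := (norm_eq_iInf_iff_real_inner_le_zero hconv hpC).mp hinf
  have h1 : ⟪θ + v - p, v⟫ ≤ 0 := by
    have hvp := hv p hpC
    have hcls : IsClosed {z : E n | ⟪θ + v - p, z⟫ ≤ 0} :=
      isClosed_le (Continuous.inner continuous_const continuous_id) continuous_const
    refine closure_minimal ?_ hcls hvp
    rintro u ⟨α, hα, θ', hθ', rfl⟩
    simp only [Set.mem_setOf_eq, real_inner_smul_right]
    exact mul_nonpos_of_nonneg_of_nonpos hα (hVI _ hθ')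
  have h2 : ⟪θ + v - p, θ - p⟫ ≤ 0 := hVI θ hθ
  have hzero : θ + v - p = 0 := by
    have hsplit : ⟪θ + v - p, θ + v - p⟫ = ⟪θ + v - p, v⟫ + ⟪θ + v - p, θ - p⟫ := by
      rw [← inner_add_right]
      congr 1
      abel
    have : ⟪θ + v - p, θ + v - p⟫ ≤ 0 := by rw [hsplit]; linarith
    exact real_inner_self_nonpos.mp this
  have : θ + v = p := by
    have := sub_eq_zero.mp hzero
    exact this
  rw [this]; exact hpC

lemma recession {n : ℕ} {C : Set (E n)} (hcl : IsClosed C) (hconv : Convex ℝ C)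
    {θ0 : E n} (hθ0 : θ0 ∈ C) {v : E n} (hv : ∀ θ ∈ C, v ∈ tanCone C θ) :
    ∀ c : ℝ, 0 ≤ c → θ0 + c • v ∈ C := by
  have hnat : ∀ m : ℕ, θ0 + (m : ℝ) • v ∈ C := by
    intro m
    induction m with
    | zero => simpa using hθ0
    | succ k ih =>
      have h := mem_C_of_tanCone hcl hconv hv ih
      have heq : θ0 + (k : ℝ) • v + v = θ0 + ((k : ℝ) + 1) • v := by module
      rw [heq] at h
      simpa [add_smul] using h
  intro c hc
  obtain ⟨m, hm⟩ := exists_nat_ge c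
  rcases eq_or_lt_of_le hc with h0 | h0
  · simp [← h0, hθ0]
  · have hm0 : (0 : ℝ) < m := lt_of_lt_of_le h0 hm
    have hcm : c / m ≤ 1 := by
      rw [div_le_one hm0]; exact hm
    have hcomb := hconv hθ0 (hnat m) (by linarith : (0:ℝ) ≤ 1 - c / m)
      (by positivity : (0:ℝ) ≤ c / m) (by ring)
    have heq : (1 - c / m) • θ0 + (c / m) • (θ0 + (m : ℝ) • v) = θ0 + c • v := by
      match_scalars <;> field_simp <;> ring
    rwa [heq] at hcomb

theorem stmt19 {n : ℕ} (C : Set (E n)) (hne : C.Nonempty) (hcl : IsClosed C)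
    (hconv : Convex ℝ C) (θ0 : E n) (hθ0 : θ0 ∈ C)
    (F : Set (E n)) (hF : F = (fun θ => θ - θ0) '' C)
    (K : Set (E n)) (hK : K = ⋂ θ ∈ C, tanCone C θ)
    (PF PK : E n → E n) (hPF : IsProjOn F PF) (hPK : IsProjOn K PK)
    (x : E n) :
    ‖PK x‖ ≤ ‖PF x‖ := by
  set p := PF x with hp
  set q := PK x with hq
  -- convexity
  have hKconv : Convex ℝ K := by
    rw [hK]; exact convex_iInter fun θ => convex_iInter fun _ => tanCone_convex hconv θ
  have hFconv : Convex ℝ F := by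
    rw [hF]
    have : (fun θ : E n => θ - θ0) '' C = (fun z => -θ0 + z) '' C := by
      apply image_congr; intro a _; rw [sub_eq_neg_add]
    rw [this]
    exact hconv.translate (-θ0)
  -- memberships
  have hqK : q ∈ K := (hPK x).1
  have hpF : p ∈ F := (hPF x).1
  have h0F : (0 : E n) ∈ F := by
    rw [hF]; exact ⟨θ0, hθ0, by simp⟩
  have h0K : (0 : E n) ∈ K := by
    rw [hK]
    refine mem_iInter₂.mpr fun θ hθ => subset_closure ⟨0, le_refl 0, θ, hθ, by simp⟩
  -- variational inequalities
  have hVIF := (norm_eq_iInf_iff_real_inner_le_zero hFconv hpF).mp (proj_norm_eq_iInf hPF x)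
  have hVIK := (norm_eq_iInf_iff_real_inner_le_zero hKconv hqK).mp (proj_norm_eq_iInf hPK x)
  -- q is a recession direction : c • q ∈ F for c ≥ 0
  have hrec : ∀ c : ℝ, 0 ≤ c → c • q ∈ F := by
    intro c hc
    have hq' : ∀ θ ∈ C, q ∈ tanCone C θ := by
      intro θ hθ
      have := hqK
      rw [hK] at this
      exact mem_iInter₂.mp this θ hθ
    have := recession hcl hconv hθ0 hq' c hc
    rw [hF]
    exact ⟨θ0 + c • q, this, by simp⟩
  -- ⟪x - p, q⟫ ≤ 0
  have hBnn : 0 ≤ ⟪x - p, p⟫ := by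
    have := hVIF 0 h0F
    rw [zero_sub, inner_neg_right] at this
    linarith
  have hA : ⟪x - p, q⟫ ≤ 0 := by
    by_contra h
    push_neg at h
    set A := ⟪x - p, q⟫
    set B := ⟪x - p, p⟫
    have hc : (0:ℝ) ≤ (B + 1) / A := by positivity
    have := hVIF _ (hrec _ hc)
    rw [inner_sub_right, real_inner_smul_right] at this
    have hAne : A ≠ 0 := ne_of_gt h
    rw [div_mul_cancel₀ _ hAne] at this
    linarith
  -- ‖q‖² ≤ ⟪x, q⟫
  have hq2 : ‖q‖ ^ 2 ≤ ⟪x, q⟫ := by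
    have := hVIK 0 h0K
    rw [zero_sub, inner_neg_right, inner_sub_left] at this
    have h := real_inner_self_eq_norm_sq q
    nlinarith [this]
  -- combine
  have hxq : ⟪x, q⟫ ≤ ‖p‖ * ‖q‖ := by
    have hsplit : ⟪x, q⟫ = ⟪x - p, q⟫ + ⟪p, q⟫ := by rw [← inner_add_left]; congr 1; abel
    have := real_inner_le_norm p q
    linarith
  have key : ‖q‖ ^ 2 ≤ ‖p‖ * ‖q‖ := le_trans hq2 hxq
  rcases eq_or_lt_of_le (norm_nonneg q) with h0 | h0
  · rw [← h0]; exact norm_nonneg p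
  · nlinarith
end
end
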